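/- arXiv:1401.7092 — 6 statements merged into one kernel-verified Lean document; each statement's English description precedes it below -/
import Mathlib

section
/- For integers m ≥ 1 and 1 ≤ n ≤ k, the set SAT_{Q^m}(Z^m, k, n) of systems of n equations in k variables over Z^m that are solvable in Q^m is generic: its asymptotic density with respect to the ball stratification of Z^{n(k+m)} equals 1. -/
open Filter

open Filter Finset
open scoped Classical
namespace SatQAux



noncomputable section

abbrev box (r : ℕ) : Finset ℤ := Finset.Icc (-(r:ℤ)) r

lemma card_box (r : ℕ) : (box r).card = 2*r+1 := by
  rw [box, Int.card_Icc]; omega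

lemma mem_box {r : ℕ} {x : ℤ} : x ∈ box r ↔ |x| ≤ (r:ℤ) := by
  simp [box, Finset.mem_Icc, abs_le, and_comm]

abbrev mbox (a b r : ℕ) : Finset (Matrix (Fin a) (Fin b) ℤ) :=
  Fintype.piFinset fun _ => Fintype.piFinset fun _ => box r

lemma mem_mbox {a b r : ℕ} {A : Matrix (Fin a) (Fin b) ℤ} :
    A ∈ mbox a b r ↔ ∀ i j, |A i j| ≤ (r:ℤ) := by
  constructor
  · intro h i j
    exact mem_box.mp (Fintype.mem_piFinset.mp (Fintype.mem_piFinset.mp h i) j)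
  · intro h
    exact Fintype.mem_piFinset.mpr fun i => Fintype.mem_piFinset.mpr fun j => mem_box.mpr (h i j)

lemma card_mbox (a b r : ℕ) : (mbox a b r).card = (2*r+1)^(a*b) := by
  show (Fintype.piFinset fun _ : Fin a => Fintype.piFinset fun _ : Fin b => box r).card = _
  rw [Fintype.card_piFinset]
  simp only [Fintype.card_piFinset, card_box, Finset.prod_const, Finset.card_univ,
    Fintype.card_fin]
  rw [← pow_mul, mul_comm b a]

lemma exists_funcl {n : ℕ} (V : Submodule ℚ (Fin n → ℚ)) (hV : V ≠ ⊤) :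
    ∃ c : Fin n → ℚ, c ≠ 0 ∧ ∀ x ∈ V, ∑ j, c j * x j = 0 := by
  obtain ⟨f, hf0, hmap⟩ := V.exists_dual_map_eq_bot_of_lt_top hV.lt_top inferInstance
  have hrep : ∀ x : Fin n → ℚ, f x = ∑ j, f (Pi.single j (1:ℚ)) * x j := by
    intro x
    conv_lhs => rw [← Finset.univ_sum_single x, map_sum]
    refine Finset.sum_congr rfl fun j _ => ?_
    have h1 : Pi.single j (x j) = (x j) • (Pi.single j (1:ℚ) : Fin n → ℚ) := by
      rw [← Pi.single_smul, smul_eq_mul, mul_one]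
    rw [h1, map_smul, smul_eq_mul, mul_comm]
  refine ⟨fun j => f (Pi.single j (1:ℚ)), ?_, ?_⟩
  · intro hc
    apply hf0
    apply LinearMap.ext
    intro x
    rw [LinearMap.zero_apply, hrep]
    have h2 : ∀ j, f (Pi.single j (1:ℚ)) = 0 := fun j => congrFun hc j
    simp [h2]
  · intro x hxV
    have h1 : f x ∈ V.map f := Submodule.mem_map_of_mem hxV
    rw [hmap, Submodule.mem_bot] at h1
    rw [← hrep]; exact h1

end


lemma span_rows_ne_top {n : ℕ} (hn : 1 ≤ n) (M : Matrix (Fin n) (Fin n) ℚ) (i : Fin n) :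
    Submodule.span ℚ (M '' {i' | i' ≠ i}) ≠ ⊤ := by
  haveI : Fintype ↑(M '' {i' | i' ≠ i}) := Set.fintypeImage _ _
  have h := span_lt_top_of_card_lt_finrank (R := ℚ) (s := M '' {i' | i' ≠ i}) ?_
  · exact h.ne
  · have h1 : (M '' {i' | i' ≠ i}).toFinset.card ≤ ({i' | i' ≠ i} : Set (Fin n)).toFinset.card := by
      erw [Set.toFinset_image]
      exact Finset.card_image_le
    have h2 : ({i' | i' ≠ i} : Set (Fin n)).toFinset.card = n - 1 := by
      rw [Set.toFinset_setOf, Finset.filter_ne',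
        Finset.card_erase_of_mem (Finset.mem_univ i)]
      simp
    have h3 : Module.finrank ℚ (Fin n → ℚ) = n := by
      simp [Module.finrank_pi]
    rw [h3]
    omega

lemma exists_row_mem_span {n : ℕ} (M : Matrix (Fin n) (Fin n) ℚ) (hdet : M.det = 0) :
    ∃ i, M i ∈ Submodule.span ℚ (M '' {i' | i' ≠ i}) := by
  obtain ⟨v, hv, hvM⟩ := (Matrix.exists_vecMul_eq_zero_iff).mpr hdet
  obtain ⟨i, hvi⟩ := Function.ne_iff.mp hv
  have hne : v i ≠ 0 := by simpa using hvi
  refine ⟨i, ?_⟩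
  have key : M i = ∑ i' ∈ Finset.univ.erase i, (-(v i' / v i)) • M i' := by
    funext j
    rw [Finset.sum_apply]
    simp only [Pi.smul_apply, smul_eq_mul]
    have h0 : v i * M i j + ∑ i' ∈ Finset.univ.erase i, v i' * M i' j = 0 := by
      have h := congrFun hvM j
      simp only [Matrix.vecMul, dotProduct, Pi.zero_apply] at h
      rw [← Finset.add_sum_erase _ _ (Finset.mem_univ i)] at h
      exact h
    have h1 : v i * M i j = v i * ∑ i' ∈ Finset.univ.erase i, (-(v i' / v i)) * M i' j := by
      rw [Finset.mul_sum]
      have h2 : ∀ i' ∈ Finset.univ.erase i,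
          v i * ((-(v i' / v i)) * M i' j) = -(v i' * M i' j) := by
        intro i' _
        field_simp
      rw [Finset.sum_congr rfl h2, Finset.sum_neg_distrib]
      linarith
    exact mul_left_cancel₀ hne h1
  rw [key]
  refine Submodule.sum_mem _ fun i' hi' => ?_
  refine Submodule.smul_mem _ _ (Submodule.subset_span ?_)
  exact ⟨i', Finset.mem_erase.mp hi' |>.1, rfl⟩


lemma solvable_of_det_ne_zero {m n k : ℕ} (hnk : n ≤ k)
    (A : Matrix (Fin n) (Fin k) ℤ) (B : Matrix (Fin n) (Fin m) ℤ)
    (h : (Matrix.of fun i j : Fin n => ((A i (Fin.castLE hnk j) : ℚ))).det ≠ 0) :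
    ∃ X : Matrix (Fin k) (Fin m) ℚ, A.map ((↑) : ℤ → ℚ) * X = B.map ((↑) : ℤ → ℚ) := by
  set M : Matrix (Fin n) (Fin n) ℚ := Matrix.of fun i j : Fin n => ((A i (Fin.castLE hnk j) : ℚ))
  set E : Matrix (Fin k) (Fin n) ℚ :=
    Matrix.of fun j t => if j = Fin.castLE hnk t then 1 else 0 with hE
  have hAE : A.map ((↑) : ℤ → ℚ) * E = M := by
    ext i t
    rw [Matrix.mul_apply]
    simp only [hE, Matrix.of_apply, Matrix.map_apply, mul_ite, mul_one, mul_zero]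
    rw [Finset.sum_ite_eq' Finset.univ (Fin.castLE hnk t) (fun j => ((A i j : ℚ)))]
    simp [M]
  refine ⟨E * (M⁻¹ * B.map ((↑) : ℤ → ℚ)), ?_⟩
  rw [← Matrix.mul_assoc, hAE, ← Matrix.mul_assoc,
    Matrix.mul_nonsing_inv M (isUnit_iff_ne_zero.mpr h), Matrix.one_mul]


lemma filter_piFinset_card {ι β : Type*} [Fintype ι] [DecidableEq ι] [DecidableEq β]
    (f : ι → Finset β) (i : ι) (P : β → Prop) [DecidablePred P] :
    ((Fintype.piFinset f).filter (fun A => P (A i))).card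
      = ((f i).filter P).card * ∏ i' ∈ Finset.univ.erase i, (f i').card := by
  have hset : (Fintype.piFinset f).filter (fun A => P (A i))
      = Fintype.piFinset (Function.update f i ((f i).filter P)) := by
    ext A
    simp only [Finset.mem_filter, Fintype.mem_piFinset]
    constructor
    · rintro ⟨h1, h2⟩ i'
      rcases eq_or_ne i' i with rfl | hne
      · rw [Function.update_self]; exact Finset.mem_filter.mpr ⟨h1 i', h2⟩
      · rw [Function.update_of_ne hne]; exact h1 i'
    · intro hA
      refine ⟨fun i' => ?_, ?_⟩
      · rcases eq_or_ne i' i with rfl | hne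
        · have := hA i'; rw [Function.update_self] at this
          exact (Finset.mem_filter.mp this).1
        · have := hA i'; rwa [Function.update_of_ne hne] at this
      · have := hA i; rw [Function.update_self] at this
        exact (Finset.mem_filter.mp this).2
  rw [hset, Fintype.card_piFinset]
  rw [Finset.prod_congr rfl
    (fun i' _ => Function.apply_update (fun _ s => Finset.card s) f i ((f i).filter P) i')]
  rw [Finset.prod_update_of_mem (Finset.mem_univ i), Finset.sdiff_singleton_eq_erase]

noncomputable def cOf {n : ℕ} (W : Submodule ℚ (Fin n → ℚ)) : Fin n → ℚ :=
  if hW : ∃ c : Fin n → ℚ, c ≠ 0 ∧ ∀ x ∈ W, ∑ j, c j * x j = 0 then hW.choose else 0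

lemma cOf_spec {n : ℕ} {W : Submodule ℚ (Fin n → ℚ)}
    (h : ∃ c : Fin n → ℚ, c ≠ 0 ∧ ∀ x ∈ W, ∑ j, c j * x j = 0) :
    cOf W ≠ 0 ∧ ∀ x ∈ W, ∑ j, cOf W j * x j = 0 := by
  rw [cOf, dif_pos h]; exact h.choose_spec

noncomputable def jOf {n : ℕ} (hn : 1 ≤ n) (c : Fin n → ℚ) : Fin n :=
  if h : ∃ j, c j ≠ 0 then h.choose else ⟨0, hn⟩

lemma jOf_spec {n : ℕ} (hn : 1 ≤ n) {c : Fin n → ℚ} (hc : c ≠ 0) : c (jOf hn c) ≠ 0 := by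
  have h : ∃ j, c j ≠ 0 := Function.ne_iff.mp (by exact hc)
  rw [jOf, dif_pos h]; exact h.choose_spec

noncomputable def iOf {n : ℕ} (hn : 1 ≤ n) (M : Matrix (Fin n) (Fin n) ℚ) : Fin n :=
  if h : ∃ i, M i ∈ Submodule.span ℚ (M '' {i' | i' ≠ i}) then h.choose else ⟨0, hn⟩

lemma iOf_spec {n : ℕ} (hn : 1 ≤ n) {M : Matrix (Fin n) (Fin n) ℚ}
    (h : ∃ i, M i ∈ Submodule.span ℚ (M '' {i' | i' ≠ i})) :
    M (iOf hn M) ∈ Submodule.span ℚ (M '' {i' | i' ≠ iOf hn M}) := by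
  rw [iOf, dif_pos h]; exact h.choose_spec


lemma exp_eq_aux (m n k : ℕ) (hn : 1 ≤ n) (hk : 1 ≤ k) :
    k - 1 + k * (n - 1) + n * m = n * (k + m) - 1 := by
  obtain ⟨n', rfl⟩ : ∃ n', n = n'+1 := ⟨n-1, by omega⟩
  obtain ⟨k', rfl⟩ : ∃ k', k = k'+1 := ⟨k-1, by omega⟩
  simp only [Nat.add_sub_cancel]
  exact (Nat.sub_eq_of_eq_add (by ring)).symm

lemma card_bad_le (m n k r : ℕ) (hn : 1 ≤ n) (hnk : n ≤ k) :
    (((mbox n k r) ×ˢ (mbox n m r)).filter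
      (fun p => (Matrix.of fun i j : Fin n => ((p.1 i (Fin.castLE hnk j) : ℚ))).det = 0)).card
    ≤ (n * n) * (2*r+1) ^ (n*(k+m) - 1) := by
  have hk : 1 ≤ k := le_trans hn hnk
  set e0 : Fin n → Fin k := Fin.castLE hnk with he0
  set Msub : Matrix (Fin n) (Fin k) ℤ × Matrix (Fin n) (Fin m) ℤ → Matrix (Fin n) (Fin n) ℚ :=
    fun p => Matrix.of fun i j : Fin n => ((p.1 i (e0 j) : ℚ)) with hMsub
  set Vsp : Matrix (Fin n) (Fin k) ℤ × Matrix (Fin n) (Fin m) ℤ → Fin n →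
      Submodule ℚ (Fin n → ℚ) :=
    fun p i => Submodule.span ℚ (Msub p '' {i' | i' ≠ i}) with hVsp
  set I : Matrix (Fin n) (Fin k) ℤ × Matrix (Fin n) (Fin m) ℤ → Fin n :=
    fun p => iOf hn (Msub p) with hI
  set J : Matrix (Fin n) (Fin k) ℤ × Matrix (Fin n) (Fin m) ℤ → Fin n :=
    fun p => jOf hn (cOf (Vsp p (I p))) with hJ
  set bad := ((mbox n k r) ×ˢ (mbox n m r)).filter
      (fun p => (Msub p).det = 0) with hbad
  -- existence facts
  have hcex : ∀ p i, ∃ c : Fin n → ℚ, c ≠ 0 ∧ ∀ x ∈ Vsp p i, ∑ j, c j * x j = 0 :=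
    fun p i => exists_funcl _ (span_rows_ne_top hn (Msub p) i)
  -- Z bound
  have hZ : ∀ i j, (((mbox n k r) ×ˢ (mbox n m r)).filter
      (fun p => p.1 i (e0 j) = 0)).card ≤ (2*r+1) ^ (n*(k+m) - 1) := by
    intro i j
    have hprod : ((mbox n k r) ×ˢ (mbox n m r)).filter (fun p => p.1 i (e0 j) = 0)
        = ((mbox n k r).filter (fun A => A i (e0 j) = 0)) ×ˢ (mbox n m r) := by
      ext p
      simp only [Finset.mem_filter, Finset.mem_product]
      tauto
    rw [hprod, Finset.card_product]
    have h1 : ((mbox n k r).filter (fun A => A i (e0 j) = 0)).card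
        = (((Fintype.piFinset fun _ : Fin k => box r).filter (fun v => v (e0 j) = 0)).card)
          * ∏ _i' ∈ Finset.univ.erase i, (Fintype.piFinset fun _ : Fin k => box r).card :=
      filter_piFinset_card (fun _ : Fin n => Fintype.piFinset fun _ : Fin k => box r) i
        (fun v => v (e0 j) = 0)
    have h2 : ((Fintype.piFinset fun _ : Fin k => box r).filter (fun v => v (e0 j) = 0)).card
        = ((box r).filter (fun x => x = (0:ℤ))).card
          * ∏ _j' ∈ Finset.univ.erase (e0 j), (box r).card :=
      filter_piFinset_card (fun _ : Fin k => box r) (e0 j) (fun x => x = (0:ℤ))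
    have h3 : ((box r).filter (fun x => x = (0:ℤ))).card ≤ 1 := by
      refine le_trans (Finset.card_le_card ?_) (Finset.card_singleton (0:ℤ)).le
      intro x hx
      simp only [Finset.mem_filter] at hx
      simp [hx.2]
    have hcardpi : (Fintype.piFinset fun _ : Fin k => box r).card = (2*r+1)^k := by
      rw [Fintype.card_piFinset, Finset.prod_const, card_box, Finset.card_univ,
        Fintype.card_fin]
    have h2' : ((Fintype.piFinset fun _ : Fin k => box r).filter
        (fun v => v (e0 j) = 0)).card ≤ (2*r+1)^(k-1) := by
      rw [h2]
      calc ((box r).filter (fun x => x = (0:ℤ))).card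
            * ∏ _j' ∈ Finset.univ.erase (e0 j), (box r).card
          ≤ 1 * ∏ _j' ∈ Finset.univ.erase (e0 j), (box r).card :=
            Nat.mul_le_mul_right _ h3
        _ = (2*r+1)^(k-1) := by
            rw [one_mul, Finset.prod_const, card_box,
              Finset.card_erase_of_mem (Finset.mem_univ _)]
            simp
    have h1' : ((mbox n k r).filter (fun A => A i (e0 j) = 0)).card
        ≤ (2*r+1)^(k-1) * ((2*r+1)^k)^(n-1) := by
      rw [h1]
      refine Nat.mul_le_mul h2' ?_
      rw [Finset.prod_const, hcardpi, Finset.card_erase_of_mem (Finset.mem_univ _)]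
      simp
    calc ((mbox n k r).filter (fun A => A i (e0 j) = 0)).card * (mbox n m r).card
        ≤ ((2*r+1)^(k-1) * ((2*r+1)^k)^(n-1)) * (2*r+1)^(n*m) := by
          rw [card_mbox]
          exact Nat.mul_le_mul_right _ h1'
      _ = (2*r+1) ^ (n*(k+m) - 1) := by
          rw [← pow_mul, ← pow_add, ← pow_add]
          congr 1
          exact exp_eq_aux m n k hn hk
  -- injection bound for each (i, j)
  have hfil : ∀ i j : Fin n,
      (bad.filter fun p => I p = i ∧ J p = j).card
        ≤ (((mbox n k r) ×ˢ (mbox n m r)).filter (fun p => p.1 i (e0 j) = 0)).card := by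
    intro i j
    apply Finset.card_le_card_of_injOn
      (fun p => (Function.update p.1 i (Function.update (p.1 i) (e0 j) 0), p.2))
    · -- maps into
      rintro p hp
      simp only [Finset.mem_coe, Finset.mem_filter, hbad] at hp
      obtain ⟨⟨hpmem, hpdet⟩, hpI, hpJ⟩ := hp
      rw [Finset.mem_product] at hpmem
      refine Finset.mem_coe.mpr (Finset.mem_filter.mpr ⟨Finset.mem_product.mpr ⟨?_, hpmem.2⟩, ?_⟩)
      · rw [mem_mbox]
        intro i' j'
        dsimp only
        erw [Function.update_apply]
        split_ifs with h
        · subst h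
          rw [Function.update_apply]
          split_ifs with h'
          · simp
          · exact mem_mbox.mp hpmem.1 i' j'
        · exact mem_mbox.mp hpmem.1 i' j'
      · show Function.update p.1 i (Function.update (p.1 i) (e0 j) 0) i (e0 j) = 0
        erw [Function.update_self, Function.update_self]
    · -- injective on
      rintro p hp q hq huv
      simp only [Finset.mem_coe, Finset.mem_filter, hbad] at hp hq
      obtain ⟨⟨hpmem, hpdet⟩, hpI, hpJ⟩ := hp
      obtain ⟨⟨hqmem, hqdet⟩, hqI, hqJ⟩ := hq
      simp only [Prod.mk.injEq] at huv
      obtain ⟨h1, h2⟩ := huv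
      have hrows : ∀ i', i' ≠ i → p.1 i' = q.1 i' := by
        intro i' hne
        have := congrFun h1 i'
        erw [Function.update_of_ne hne, Function.update_of_ne hne] at this; exact this
      have hrowi : ∀ j', j' ≠ e0 j → p.1 i j' = q.1 i j' := by
        intro j' hne
        have := congrFun (congrFun h1 i) j'
        erw [Function.update_self, Function.update_self] at this
        rwa [Function.update_of_ne hne, Function.update_of_ne hne] at this
      -- the spans agree
      have hMrows : ∀ i', i' ≠ i → Msub p i' = Msub q i' := by
        intro i' hne
        funext j''
        simp only [hMsub, Matrix.of_apply]
        rw [hrows i' hne]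
      have hVeq : Vsp p i = Vsp q i := by
        simp only [hVsp]
        congr 1
        exact Set.image_congr fun i' hi' => hMrows i' hi'
      -- membership of row i in the span
      have hrowmem : ∀ s : Matrix (Fin n) (Fin k) ℤ × Matrix (Fin n) (Fin m) ℤ,
          (Msub s).det = 0 → I s = i → Msub s i ∈ Vsp s i := by
        intro s hsdet hsI
        have := iOf_spec hn (exists_row_mem_span (Msub s) hsdet)
        rw [show iOf hn (Msub s) = I s from rfl, hsI] at this
        exact this
      set c : Fin n → ℚ := cOf (Vsp p i) with hc
      have hcp := cOf_spec (hcex p i)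
      have hcq := cOf_spec (hcex q i)
      rw [← hVeq] at hcq
      have hJp : J p = jOf hn c := by
        simp only [hJ, hc, hpI]
      have hcj : c j ≠ 0 := by
        rw [← hpJ, hJp]
        exact jOf_spec hn hcp.1
      have hsp : ∑ j', c j' * Msub p i j' = 0 := hcp.2 _ (hrowmem p hpdet hpI)
      have hsq : ∑ j', c j' * Msub q i j' = 0 := hcq.2 _ (by
        rw [hVeq]; exact hrowmem q hqdet hqI)
      rw [← Finset.add_sum_erase _ _ (Finset.mem_univ j)] at hsp hsq
      have hsumeq : ∑ j' ∈ Finset.univ.erase j, c j' * Msub p i j'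
          = ∑ j' ∈ Finset.univ.erase j, c j' * Msub q i j' := by
        refine Finset.sum_congr rfl fun j' hj' => ?_
        have hj'ne : j' ≠ j := (Finset.mem_erase.mp hj').1
        have : e0 j' ≠ e0 j := fun h => hj'ne (Fin.castLE_injective hnk h)
        simp only [hMsub, Matrix.of_apply]
        rw [hrowi _ this]
      have hMij : Msub p i j = Msub q i j := by
        have : c j * Msub p i j = c j * Msub q i j := by linarith
        exact mul_left_cancel₀ hcj this
      have hentry : p.1 i (e0 j) = q.1 i (e0 j) := by
        have : ((p.1 i (e0 j) : ℚ)) = ((q.1 i (e0 j) : ℚ)) := by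
          simpa only [hMsub, Matrix.of_apply] using hMij
        exact_mod_cast this
      have hfst : p.1 = q.1 := by
        funext i' j'
        rcases eq_or_ne i' i with rfl | hne
        · rcases eq_or_ne j' (e0 j) with rfl | hne'
          · exact hentry
          · exact hrowi j' hne'
        · exact congrFun (hrows i' hne) j'
      exact Prod.ext hfst h2
  -- combine
  have hbU : bad ⊆ Finset.univ.biUnion
      (fun ij : Fin n × Fin n => bad.filter fun p => I p = ij.1 ∧ J p = ij.2) := by
    intro p hp
    exact Finset.mem_biUnion.mpr ⟨(I p, J p), Finset.mem_univ _,
      Finset.mem_filter.mpr ⟨hp, rfl, rfl⟩⟩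
  calc bad.card ≤ (Finset.univ.biUnion
        (fun ij : Fin n × Fin n => bad.filter fun p => I p = ij.1 ∧ J p = ij.2)).card :=
        Finset.card_le_card hbU
    _ ≤ ∑ ij : Fin n × Fin n, (bad.filter fun p => I p = ij.1 ∧ J p = ij.2).card :=
        Finset.card_biUnion_le
    _ ≤ ∑ _ij : Fin n × Fin n, (2*r+1) ^ (n*(k+m) - 1) :=
        Finset.sum_le_sum fun ij _ => le_trans (hfil ij.1 ij.2) (hZ ij.1 ij.2)
    _ = (n * n) * (2*r+1) ^ (n*(k+m) - 1) := by
        rw [Finset.sum_const, Finset.card_univ, Fintype.card_prod, Fintype.card_fin, smul_eq_mul]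



end SatQAux


/-- For `m ≥ 1` and `1 ≤ n ≤ k`, the set `SAT_{Q^m}(Z^m, k, n)` of systems
of `n` equations in `k` variables over `Z^m` that are solvable in `Q^m` is generic:
its asymptotic density with respect to the ball stratification of `Z^{n(k+m)}` equals 1. -/
theorem satQ_generic_of_le (m n k : ℕ) (hm : 1 ≤ m) (hn : 1 ≤ n) (hnk : n ≤ k) :
    Tendsto (fun r : ℕ =>
      ((Set.ncard {p : Matrix (Fin n) (Fin k) ℤ × Matrix (Fin n) (Fin m) ℤ |
          (∃ X : Matrix (Fin k) (Fin m) ℚ,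
            p.1.map ((↑) : ℤ → ℚ) * X = p.2.map ((↑) : ℤ → ℚ)) ∧
          (∀ i j, |p.1 i j| ≤ (r : ℤ)) ∧ (∀ i j, |p.2 i j| ≤ (r : ℤ))} : ℝ) /
        (2 * (r : ℝ) + 1) ^ (n * (k + m))))
      atTop (nhds 1) := by
  classical
  have hk : 1 ≤ k := le_trans hn hnk
  set D := n * (k + m) with hDdef
  have hD1 : 1 ≤ D := by
    calc 1 = 1 * 1 := by ring
      _ ≤ n * (k + m) := Nat.mul_le_mul hn (by omega)
  set c : ℕ := n * n with hcdef
  set Sfin : ℕ → Finset (Matrix (Fin n) (Fin k) ℤ × Matrix (Fin n) (Fin m) ℤ) :=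
    fun r => ((SatQAux.mbox n k r ×ˢ SatQAux.mbox n m r).filter
      (fun p => ∃ X : Matrix (Fin k) (Fin m) ℚ,
        p.1.map ((↑) : ℤ → ℚ) * X = p.2.map ((↑) : ℤ → ℚ))) with hSfin
  have hncard : ∀ r : ℕ,
      {p : Matrix (Fin n) (Fin k) ℤ × Matrix (Fin n) (Fin m) ℤ |
          (∃ X : Matrix (Fin k) (Fin m) ℚ,
            p.1.map ((↑) : ℤ → ℚ) * X = p.2.map ((↑) : ℤ → ℚ)) ∧
          (∀ i j, |p.1 i j| ≤ (r : ℤ)) ∧ (∀ i j, |p.2 i j| ≤ (r : ℤ))}.ncard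
        = (Sfin r).card := by
    intro r
    rw [← Set.ncard_coe_finset]
    congr 1
    ext p
    simp only [Set.mem_setOf_eq, Finset.mem_coe, hSfin, Finset.mem_filter,
      Finset.mem_product, SatQAux.mem_mbox]
    tauto
  have hcardbox : ∀ r : ℕ,
      (SatQAux.mbox n k r ×ˢ SatQAux.mbox n m r).card = (2*r+1)^D := by
    intro r
    rw [Finset.card_product, SatQAux.card_mbox, SatQAux.card_mbox, ← pow_add, hDdef,
      Nat.mul_add]
  have hupper : ∀ r : ℕ, (Sfin r).card ≤ (2*r+1)^D := by
    intro r
    calc (Sfin r).card ≤ (SatQAux.mbox n k r ×ˢ SatQAux.mbox n m r).card :=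
          Finset.card_le_card (Finset.filter_subset _ _)
      _ = (2*r+1)^D := hcardbox r
  have hlower : ∀ r : ℕ, (2*r+1)^D ≤ (Sfin r).card + c * (2*r+1)^(D-1) := by
    intro r
    have hsplit := Finset.card_filter_add_card_filter_not
      (s := SatQAux.mbox n k r ×ˢ SatQAux.mbox n m r)
      (p := fun p => (Matrix.of fun i j : Fin n => ((p.1 i (Fin.castLE hnk j) : ℚ))).det ≠ 0)
    have hgood : ((SatQAux.mbox n k r ×ˢ SatQAux.mbox n m r).filter
        (fun p => (Matrix.of fun i j : Fin n =>
          ((p.1 i (Fin.castLE hnk j) : ℚ))).det ≠ 0)).card ≤ (Sfin r).card := by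
      apply Finset.card_le_card
      intro p hp
      rw [Finset.mem_filter] at hp
      rw [hSfin, Finset.mem_filter]
      exact ⟨hp.1, SatQAux.solvable_of_det_ne_zero hnk p.1 p.2 hp.2⟩
    have hbadc : ((SatQAux.mbox n k r ×ˢ SatQAux.mbox n m r).filter
        (fun p => ¬ (Matrix.of fun i j : Fin n =>
          ((p.1 i (Fin.castLE hnk j) : ℚ))).det ≠ 0)).card ≤ c * (2*r+1)^(D-1) := by
      refine le_trans (le_of_eq ?_) (SatQAux.card_bad_le m n k r hn hnk)
      congr 1
      ext p
      simp [Finset.mem_filter, not_not]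
    calc (2*r+1)^D = (SatQAux.mbox n k r ×ˢ SatQAux.mbox n m r).card := (hcardbox r).symm
      _ = _ + _ := hsplit.symm
      _ ≤ (Sfin r).card + c * (2*r+1)^(D-1) := Nat.add_le_add hgood hbadc
  have hNpos : ∀ r : ℕ, (0:ℝ) < 2*(r:ℝ)+1 := fun r => by positivity
  refine tendsto_of_tendsto_of_tendsto_of_le_of_le
    (g := fun r : ℕ => 1 - (c:ℝ)/(2*(r:ℝ)+1)) (h := fun _ : ℕ => (1:ℝ)) ?_ ?_ ?_ ?_
  · have hN : Tendsto (fun r : ℕ => 2*(r:ℝ)+1) atTop atTop :=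
      tendsto_atTop_add_const_right _ 1 (tendsto_natCast_atTop_atTop.const_mul_atTop two_pos)
    have h0 : Tendsto (fun r : ℕ => (c:ℝ)/(2*(r:ℝ)+1)) atTop (nhds 0) :=
      Tendsto.div_atTop tendsto_const_nhds hN
    simpa using tendsto_const_nhds.sub h0
  · exact tendsto_const_nhds
  · intro r
    dsimp only
    rw [hncard r]
    have hND : (0:ℝ) < (2*(r:ℝ)+1)^D := by positivity
    have hkey : (2*(r:ℝ)+1)^D ≤ ((Sfin r).card : ℝ) + (c:ℝ) * (2*(r:ℝ)+1)^(D-1) := by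
      have h1 := (Nat.cast_le (α := ℝ)).mpr (hlower r)
      push_cast at h1
      convert h1 using 3
    rw [sub_le_iff_le_add]
    have h2 : (c:ℝ)/(2*(r:ℝ)+1) = ((c:ℝ) * (2*(r:ℝ)+1)^(D-1))/((2*(r:ℝ)+1)^D) := by
      rw [div_eq_div_iff (hNpos r).ne' hND.ne']
      have h3 : (2*(r:ℝ)+1)^D = (2*(r:ℝ)+1)^(D-1) * (2*(r:ℝ)+1) := by
        rw [← pow_succ]
        congr 1
        omega
      rw [h3]
      ring
    rw [h2, ← add_div, le_div_iff₀ hND, one_mul]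
    exact hkey
  · intro r
    dsimp only
    rw [hncard r]
    rw [div_le_one (by positivity)]
    have h1 := (Nat.cast_le (α := ℝ)).mpr (hupper r)
    push_cast at h1
    convert h1 using 2
end

section
/- For integers m ≥ 1 and n > k ≥ 1, the set SAT_{Q^m}(Z^m, k, n) of systems of n equations in k variables over Z^m that are solvable in Q^m is negligible: its asymptotic density with respect to the ball stratification of Z^{n(k+m)} equals 0. -/
open Filter

lemma aux_kernel {n k : ℕ} (hnk : k < n) (A : Matrix (Fin n) (Fin k) ℤ) :
    ∃ v : Fin n → ℚ, v ≠ 0 ∧ ∀ j, ∑ i, v i * (A i j : ℚ) = 0 := by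
  set f := (A.map ((↑) : ℤ → ℚ)).vecMulLinear
  have hni : ¬ Function.Injective f := by
    intro h
    have := LinearMap.finrank_le_finrank_of_injective h
    rw [Module.finrank_fin_fun, Module.finrank_fin_fun] at this
    omega
  obtain ⟨a, b, hab, hne⟩ := Function.not_injective_iff.mp hni
  refine ⟨a - b, sub_ne_zero.mpr hne, fun j => ?_⟩
  have : f (a - b) = 0 := by rw [map_sub, hab, sub_self]
  have h2 := congrFun this j
  simpa [f, Matrix.vecMulLinear_apply, Matrix.vecMul, dotProduct,
    Matrix.map_apply, sub_mul, Finset.sum_sub_distrib] using h2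

lemma aux_mem_box {ι κ : Type*} [Fintype ι] [Fintype κ] [DecidableEq ι] [DecidableEq κ]
    (r : ℕ) (x : ι → κ → ℤ) :
    x ∈ Finset.Icc (fun _ _ => -(r:ℤ)) (fun _ _ => (r:ℤ)) ↔ ∀ i j, |x i j| ≤ (r:ℤ) := by
  simp [Finset.mem_Icc, Pi.le_def, abs_le, forall_and]

lemma aux_card_box {ι κ : Type*} [Fintype ι] [Fintype κ] [DecidableEq ι] [DecidableEq κ]
    (r : ℕ) :
    (Finset.Icc (fun _ _ => -(r:ℤ)) (fun _ _ => (r:ℤ)) : Finset (ι → κ → ℤ)).card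
      = (2*r+1) ^ (Fintype.card ι * Fintype.card κ) := by
  have h : (Finset.Icc (-(r:ℤ)) (r:ℤ)).card = 2*r+1 := by
    rw [Int.card_Icc]; omega
  simp only [Pi.card_Icc, h, Finset.prod_const, Finset.card_univ]
  rw [← pow_mul]
  congr 1
  exact Nat.mul_comm _ _

/-- For `m ≥ 1` and `n > k ≥ 1`, the set `SAT_{Q^m}(Z^m, k, n)` of systems
of `n` equations in `k` variables over `Z^m` that are solvable in `Q^m` is negligible:
its asymptotic density with respect to the ball stratification of `Z^{n(k+m)}` equals 0. -/
theorem satQ_negligible_of_gt (m n k : ℕ) (hm : 1 ≤ m) (hk : 1 ≤ k) (hnk : k < n) :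
    Tendsto (fun r : ℕ =>
      ((Set.ncard {p : Matrix (Fin n) (Fin k) ℤ × Matrix (Fin n) (Fin m) ℤ |
          (∃ X : Matrix (Fin k) (Fin m) ℚ,
            p.1.map ((↑) : ℤ → ℚ) * X = p.2.map ((↑) : ℤ → ℚ)) ∧
          (∀ i j, |p.1 i j| ≤ (r : ℤ)) ∧ (∀ i j, |p.2 i j| ≤ (r : ℤ))} : ℝ) /
        (2 * (r : ℝ) + 1) ^ (n * (k + m))))
      atTop (nhds 0) := by
  classical
  choose v hv0 hvA using fun A : Matrix (Fin n) (Fin k) ℤ => aux_kernel hnk A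
  choose i₀ hi₀ using fun A => Function.ne_iff.mp (hv0 A)
  simp only [Pi.zero_apply] at hi₀
  -- the key counting bound
  have key : ∀ r : ℕ,
      (Set.ncard {p : Matrix (Fin n) (Fin k) ℤ × Matrix (Fin n) (Fin m) ℤ |
          (∃ X : Matrix (Fin k) (Fin m) ℚ,
            p.1.map ((↑) : ℤ → ℚ) * X = p.2.map ((↑) : ℤ → ℚ)) ∧
          (∀ i j, |p.1 i j| ≤ (r : ℤ)) ∧ (∀ i j, |p.2 i j| ≤ (r : ℤ))})
        ≤ (2*r+1) ^ (n*k) * (2*r+1) ^ ((n-1)*m) := by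
    intro r
    set boxA : Finset (Matrix (Fin n) (Fin k) ℤ) :=
      (Finset.Icc (fun _ _ => -(r:ℤ)) (fun _ _ => (r:ℤ)) : Finset (Fin n → Fin k → ℤ))
      with hboxA
    set boxB : Finset (Matrix (Fin n) (Fin m) ℤ) :=
      (Finset.Icc (fun _ _ => -(r:ℤ)) (fun _ _ => (r:ℤ)) : Finset (Fin n → Fin m → ℤ))
      with hboxB
    set F : Finset (Matrix (Fin n) (Fin k) ℤ × Matrix (Fin n) (Fin m) ℤ) :=
      (boxA ×ˢ boxB).filter (fun p => ∀ j, ∑ i, v p.1 i * ((p.2 i j : ℤ) : ℚ) = 0) with hF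
    have hsub : {p : Matrix (Fin n) (Fin k) ℤ × Matrix (Fin n) (Fin m) ℤ |
          (∃ X : Matrix (Fin k) (Fin m) ℚ,
            p.1.map ((↑) : ℤ → ℚ) * X = p.2.map ((↑) : ℤ → ℚ)) ∧
          (∀ i j, |p.1 i j| ≤ (r : ℤ)) ∧ (∀ i j, |p.2 i j| ≤ (r : ℤ))} ⊆ ↑F := by
      rintro p ⟨⟨X, hX⟩, hA, hB⟩
      have hB' : ∀ i j, (p.2 i j : ℚ) = ∑ l, (p.1 i l : ℚ) * X l j := by
        intro i j
        have h := congrFun (congrFun hX i) j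
        simpa [Matrix.mul_apply, Matrix.map_apply] using h.symm
      simp only [Finset.coe_filter, Set.mem_setOf_eq, hF, Finset.mem_product]
      refine ⟨⟨(aux_mem_box r p.1).mpr hA, (aux_mem_box r p.2).mpr hB⟩, fun j => ?_⟩
      calc ∑ i, v p.1 i * ((p.2 i j : ℤ) : ℚ)
          = ∑ i, ∑ l, v p.1 i * ((p.1 i l : ℚ) * X l j) := by
            simp [hB', Finset.mul_sum]
        _ = ∑ l, ∑ i, v p.1 i * ((p.1 i l : ℚ) * X l j) := Finset.sum_comm
        _ = ∑ l, (∑ i, v p.1 i * (p.1 i l : ℚ)) * X l j := by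
            simp [Finset.sum_mul, mul_assoc]
        _ = 0 := by simp [hvA p.1]
    have h1 : (Set.ncard {p : Matrix (Fin n) (Fin k) ℤ × Matrix (Fin n) (Fin m) ℤ |
          (∃ X : Matrix (Fin k) (Fin m) ℚ,
            p.1.map ((↑) : ℤ → ℚ) * X = p.2.map ((↑) : ℤ → ℚ)) ∧
          (∀ i j, |p.1 i j| ≤ (r : ℤ)) ∧ (∀ i j, |p.2 i j| ≤ (r : ℤ))}) ≤ F.card := by
      rw [← Set.ncard_coe_finset]
      exact Set.ncard_le_ncard hsub F.finite_toSet
    refine h1.trans ?_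
    have hfst : ∀ p ∈ F, p.1 ∈ boxA := by
      intro p hp
      simp only [hF, Finset.mem_filter, Finset.mem_product] at hp
      exact hp.1.1
    rw [Finset.card_eq_sum_card_fiberwise hfst]
    have hfiber : ∀ A ∈ boxA,
        (F.filter (fun p => p.1 = A)).card ≤ (2*r+1) ^ ((n-1)*m) := by
      intro A _
      set boxSub : Finset ({i : Fin n // i ≠ i₀ A} → Fin m → ℤ) :=
        Finset.Icc (fun _ _ => -(r:ℤ)) (fun _ _ => (r:ℤ)) with hboxSub
      have hcard : boxSub.card = (2*r+1) ^ ((n-1)*m) := by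
        rw [hboxSub, aux_card_box]
        congr 2
        · rw [Fintype.card_subtype_compl, Fintype.card_subtype_eq, Fintype.card_fin]
        · exact Fintype.card_fin m
      rw [← hcard]
      apply Finset.card_le_card_of_injOn
        (fun p => fun (i : {i : Fin n // i ≠ i₀ A}) (j : Fin m) => p.2 i.1 j)
      · intro p hp
        simp only [Finset.mem_coe, Finset.mem_filter, hF, Finset.mem_product] at hp
        have hb := (aux_mem_box r p.2).mp hp.1.1.2
        rw [hboxSub, Finset.mem_coe, Finset.mem_Icc]
        constructor <;> intro i <;> intro j <;>
          [exact (abs_le.mp (hb i.1 j)).1; exact (abs_le.mp (hb i.1 j)).2]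
      · intro p hp p' hp' himg
        simp only [Finset.coe_filter, Set.mem_setOf_eq, hF, Finset.mem_filter,
          Finset.mem_product] at hp hp'
        obtain ⟨⟨_, hPp⟩, hp1⟩ := hp
        obtain ⟨⟨_, hPp'⟩, hp1'⟩ := hp'
        have hA2 : p.1 = p'.1 := hp1.trans hp1'.symm
        refine Prod.ext hA2 ?_
        funext i j
        by_cases hi : i = i₀ A
        · subst hi
          have e1 := hPp j
          have e2 := hPp' j
          rw [hp1] at e1
          rw [hp1'] at e2
          rw [← Finset.add_sum_erase Finset.univ _ (Finset.mem_univ (i₀ A))] at e1 e2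
          have hsum : ∑ x ∈ Finset.univ.erase (i₀ A), v A x * ((p.2 x j : ℤ) : ℚ)
              = ∑ x ∈ Finset.univ.erase (i₀ A), v A x * ((p'.2 x j : ℤ) : ℚ) := by
            refine Finset.sum_congr rfl fun x hx => ?_
            have hxne : x ≠ i₀ A := Finset.ne_of_mem_erase hx
            have hx2 : p.2 x j = p'.2 x j := by
              simpa using congrFun (congrFun himg ⟨x, hxne⟩) j
            rw [hx2]
          have : v A (i₀ A) * ((p.2 (i₀ A) j : ℤ) : ℚ)
              = v A (i₀ A) * ((p'.2 (i₀ A) j : ℤ) : ℚ) := by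
            have := e1.trans e2.symm
            rw [hsum] at this
            linarith
          have := mul_left_cancel₀ (hi₀ A) this
          exact_mod_cast this
        · simpa using congrFun (congrFun himg ⟨i, hi⟩) j
    calc ∑ A ∈ boxA, (F.filter (fun p => p.1 = A)).card
        ≤ ∑ _A ∈ boxA, (2*r+1) ^ ((n-1)*m) := Finset.sum_le_sum hfiber
      _ = boxA.card * (2*r+1) ^ ((n-1)*m) := by rw [Finset.sum_const, smul_eq_mul]
      _ = (2*r+1) ^ (n*k) * (2*r+1) ^ ((n-1)*m) := by
          have := aux_card_box (ι := Fin n) (κ := Fin k) r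
          rw [Fintype.card_fin, Fintype.card_fin] at this
          exact congrArg (· * (2*r+1) ^ ((n-1)*m)) this
  -- exponent arithmetic
  have hexp : n*k + (n-1)*m + m = n*(k+m) := by
    have h2 : (n-1)*m + m = n*m := by
      obtain ⟨n', rfl⟩ : ∃ n', n = n'+1 := ⟨n-1, by omega⟩
      simp [Nat.add_mul]
    have h3 : n*(k+m) = n*k + n*m := Nat.mul_add n k m
    omega
  -- squeeze
  refine squeeze_zero (fun r => ?_) (fun r => ?_) tendsto_one_div_add_atTop_nhds_zero_nat
  · positivity
  · have hc : (0:ℝ) < 2*(r:ℝ)+1 := by positivity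
    have hc1 : (1:ℝ) ≤ 2*(r:ℝ)+1 := by
      have : (0:ℝ) ≤ (r:ℝ) := Nat.cast_nonneg r
      linarith
    have h1 : ((Set.ncard {p : Matrix (Fin n) (Fin k) ℤ × Matrix (Fin n) (Fin m) ℤ |
          (∃ X : Matrix (Fin k) (Fin m) ℚ,
            p.1.map ((↑) : ℤ → ℚ) * X = p.2.map ((↑) : ℤ → ℚ)) ∧
          (∀ i j, |p.1 i j| ≤ (r : ℤ)) ∧ (∀ i j, |p.2 i j| ≤ (r : ℤ))} : ℝ))
        ≤ (2*(r:ℝ)+1) ^ (n*k + (n-1)*m) := by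
      have := key r
      calc ((Set.ncard _ : ℕ) : ℝ) ≤ (((2*r+1) ^ (n*k) * (2*r+1) ^ ((n-1)*m) : ℕ) : ℝ) :=
            Nat.cast_le.mpr this
        _ = (2*(r:ℝ)+1) ^ (n*k + (n-1)*m) := by
            push_cast
            rw [← pow_add]
    calc (Set.ncard _ : ℝ) / (2*(r:ℝ)+1) ^ (n*(k+m))
        ≤ (2*(r:ℝ)+1) ^ (n*k + (n-1)*m) / (2*(r:ℝ)+1) ^ (n*(k+m)) := by
          gcongr
      _ = 1 / (2*(r:ℝ)+1) ^ m := by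
          have haux : ∀ (c : ℝ) (a b : ℕ), 0 < c → c^a / c^(a+b) = 1/c^b := by
            intro c a b hc0
            rw [pow_add, div_mul_eq_div_mul_one_div, div_self (pow_ne_zero _ hc0.ne'), one_mul]
          rw [← hexp]
          exact haux _ _ _ hc
      _ ≤ 1 / (2*(r:ℝ)+1) := by
          apply one_div_le_one_div_of_le hc
          exact le_self_pow₀ hc1 (by omega)
      _ ≤ 1 / ((r:ℝ)+1) := by
          apply one_div_le_one_div_of_le (by positivity)
          have : (0:ℝ) ≤ (r:ℝ) := Nat.cast_nonneg r
          linarith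
end

section
/- For integers m ≥ 1 and n > k ≥ 1, the set SAT(Z^m, k, n) of systems of n equations in k variables over Z^m that are solvable in Z^m is negligible: its asymptotic density with respect to the ball stratification of Z^{n(k+m)} equals 0. -/
open Filter

lemma aux_rel {n k : ℕ} (hnk : k < n) (A : Matrix (Fin n) (Fin k) ℤ) :
    ∃ c : Fin n → ℚ, (∃ i, c i ≠ 0) ∧ ∀ t, ∑ i, c i * (A i t : ℚ) = 0 := by
  have hnli : ¬ LinearIndependent ℚ (fun i (t : Fin k) => (A i t : ℚ)) := by
    intro h
    have h2 := h.fintype_card_le_finrank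
    simp [Module.finrank_pi] at h2
    omega
  obtain ⟨g, hg, i, hi⟩ := Fintype.not_linearIndependent_iff.mp hnli
  refine ⟨g, ⟨i, hi⟩, fun t => ?_⟩
  simpa [Finset.sum_apply] using congrFun hg t

lemma aux_det {n k m : ℕ} {A : Matrix (Fin n) (Fin k) ℤ} {c : Fin n → ℚ}
    (hrel : ∀ t, ∑ i, c i * (A i t : ℚ) = 0)
    {X : Matrix (Fin k) (Fin m) ℤ} {B : Matrix (Fin n) (Fin m) ℤ} (hX : A * X = B)
    (j : Fin m) : ∑ i, c i * (B i j : ℚ) = 0 := by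
  have hB : ∀ i, (B i j : ℚ) = ∑ t, (A i t : ℚ) * (X t j : ℚ) := by
    intro i; rw [← hX]; simp [Matrix.mul_apply]
  calc ∑ i, c i * (B i j : ℚ)
      = ∑ i, ∑ t, c i * ((A i t : ℚ) * X t j) := by simp [hB, Finset.mul_sum]
    _ = ∑ t, (∑ i, c i * (A i t : ℚ)) * X t j := by
        rw [Finset.sum_comm]
        simp [Finset.sum_mul, mul_assoc]
    _ = 0 := by simp [hrel]

lemma aux_inj {n k m : ℕ} {A : Matrix (Fin n) (Fin k) ℤ} {c : Fin n → ℚ} {i0 : Fin n}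
    (hc : c i0 ≠ 0) (hrel : ∀ t, ∑ i, c i * (A i t : ℚ) = 0)
    {B B' : Matrix (Fin n) (Fin m) ℤ}
    (hB : ∃ X, A * X = B) (hB' : ∃ X, A * X = B')
    (hupd : Function.update B i0 0 = Function.update B' i0 0) : B = B' := by
  obtain ⟨X, hX⟩ := hB; obtain ⟨X', hX'⟩ := hB'
  have hoff : ∀ i, i ≠ i0 → B i = B' i := by
    intro i hi
    have := congrFun hupd i
    simpa [Function.update, hi] using this
  funext i j
  by_cases hi : i = i0
  · subst hi
    have h1 := aux_det hrel hX j
    have h2 := aux_det hrel hX' j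
    have hsum : ∑ i, c i * ((B i j : ℚ) - (B' i j : ℚ)) = 0 := by
      simp only [mul_sub, Finset.sum_sub_distrib, h1, h2, sub_zero]
    rw [Finset.sum_eq_single i] at hsum
    · rcases mul_eq_zero.mp hsum with h | h
      · exact absurd h hc
      · exact_mod_cast sub_eq_zero.mp h
    · intro b _ hb; rw [hoff b hb]; ring
    · simp
  · rw [hoff i hi]

/-- For `m ≥ 1` and `n > k ≥ 1`, the set `SAT(Z^m, k, n)` of systems
of `n` equations in `k` variables over `Z^m` that are solvable in `Z^m` is negligible:
its asymptotic density with respect to the ball stratification of `Z^{n(k+m)}` equals 0. -/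
theorem sat_negligible_of_gt (m n k : ℕ) (hm : 1 ≤ m) (hk : 1 ≤ k) (hnk : k < n) :
    Tendsto (fun r : ℕ =>
      ((Set.ncard {p : Matrix (Fin n) (Fin k) ℤ × Matrix (Fin n) (Fin m) ℤ |
          (∃ X : Matrix (Fin k) (Fin m) ℤ, p.1 * X = p.2) ∧
          (∀ i j, |p.1 i j| ≤ (r : ℤ)) ∧ (∀ i j, |p.2 i j| ≤ (r : ℤ))} : ℝ) /
        (2 * (r : ℝ) + 1) ^ (n * (k + m))))
      atTop (nhds 0) := by
  classical
  set S : ℕ → Set (Matrix (Fin n) (Fin k) ℤ × Matrix (Fin n) (Fin m) ℤ) := fun r =>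
    {p | (∃ X : Matrix (Fin k) (Fin m) ℤ, p.1 * X = p.2) ∧
        (∀ i j, |p.1 i j| ≤ (r : ℤ)) ∧ (∀ i j, |p.2 i j| ≤ (r : ℤ))} with hS
  have hrel0 := fun A : Matrix (Fin n) (Fin k) ℤ => aux_rel hnk A
  choose c hex hcrel using hrel0
  choose i0 hi0 using hex
  -- the counting bound
  have key : ∀ r : ℕ, (S r).ncard ≤ n * (((2*r+1)^k)^n * ((2*r+1)^m)^(n-1)) := by
    intro r
    set f : Matrix (Fin n) (Fin k) ℤ × Matrix (Fin n) (Fin m) ℤ →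
        Fin n × Matrix (Fin n) (Fin k) ℤ × Matrix (Fin n) (Fin m) ℤ :=
      fun p => (i0 p.1, p.1, Function.update p.2 (i0 p.1) 0) with hf
    have hinj : Set.InjOn f (S r) := by
      intro p hp q hq hpq
      have hpq' : (i0 p.1, p.1, Function.update p.2 (i0 p.1) 0) =
          (i0 q.1, q.1, Function.update q.2 (i0 q.1) 0) := hpq
      simp only [Prod.mk.injEq] at hpq'
      obtain ⟨h1, h2, h3⟩ := hpq'
      have hA : p.1 = q.1 := h2
      have hB : p.2 = q.2 := by
        refine aux_inj (hi0 p.1) (hcrel p.1) hp.1 ?_ ?_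
        · rw [hA]; exact hq.1
        · rw [h3, hA]
      exact Prod.ext hA hB
    set Ic : Finset ℤ := Finset.Icc (-(r:ℤ)) r with hIc
    have hIcc : Ic.card = 2*r+1 := by
      rw [hIc, Int.card_Icc]; omega
    set rowB : Finset (Fin m → ℤ) := Fintype.piFinset fun _ => Ic with hrowB
    set MAbox : Finset (Matrix (Fin n) (Fin k) ℤ) :=
      (Fintype.piFinset fun _ : Fin n => Fintype.piFinset fun _ : Fin k => Ic) with hMA
    set MB0 : Fin n → Finset (Matrix (Fin n) (Fin m) ℤ) := fun i =>
      (Fintype.piFinset fun i' : Fin n =>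
        if i' = i then ({0} : Finset (Fin m → ℤ)) else rowB) with hMB0
    set T : Finset (Fin n × Matrix (Fin n) (Fin k) ℤ × Matrix (Fin n) (Fin m) ℤ) :=
      Finset.univ.biUnion fun i => {i} ×ˢ MAbox ×ˢ MB0 i with hT
    have hsub : f '' (S r) ⊆ (T : Set _) := by
      rintro _ ⟨p, hp, rfl⟩
      obtain ⟨hpX, hpA, hpB⟩ := hp
      simp only [hT, Finset.coe_biUnion, Set.mem_iUnion, Finset.mem_coe]
      refine ⟨i0 p.1, Finset.mem_univ _, ?_⟩
      rw [Finset.mem_product]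
      constructor
      · exact Finset.mem_singleton_self _
      rw [Finset.mem_product]
      constructor
      · rw [hMA]; refine Fintype.mem_piFinset.mpr ?_
        intro i
        rw [Fintype.mem_piFinset]
        intro j
        rw [hIc, Finset.mem_Icc, ← abs_le]
        exact hpA i j
      · rw [hMB0]; refine Fintype.mem_piFinset.mpr ?_
        intro i'
        by_cases hi' : i' = i0 p.1
        · subst hi'
          simp [hf, Function.update]
        · rw [if_neg hi']
          simp only [hf]
          erw [Function.update_of_ne hi']
          rw [hrowB, Fintype.mem_piFinset]
          intro j
          rw [hIc, Finset.mem_Icc, ← abs_le]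
          exact hpB i' j
    have hcard : (S r).ncard ≤ T.card := by
      rw [← Set.ncard_image_of_injOn hinj, ← Set.ncard_coe_finset T]
      exact Set.ncard_le_ncard hsub (Finset.finite_toSet T)
    refine hcard.trans ?_
    rw [hT]
    refine (Finset.card_biUnion_le).trans ?_
    have hone : ∀ i : Fin n, ({i} ×ˢ MAbox ×ˢ MB0 i).card
        = ((2*r+1)^k)^n * ((2*r+1)^m)^(n-1) := by
      intro i
      rw [Finset.card_product, Finset.card_product, Finset.card_singleton, one_mul]
      have hA : MAbox.card = ((2*r+1)^k)^n := by
        rw [hMA]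
        show (Fintype.piFinset fun _ : Fin n => Fintype.piFinset fun _ : Fin k => Ic).card = _
        rw [Fintype.card_piFinset]
        simp [Fintype.card_piFinset, hIcc, Finset.prod_const]
      have hB : (MB0 i).card = ((2*r+1)^m)^(n-1) := by
        rw [hMB0]
        show (Fintype.piFinset fun i' : Fin n =>
          if i' = i then ({0} : Finset (Fin m → ℤ)) else rowB).card = _
        rw [Fintype.card_piFinset]
        rw [← Finset.mul_prod_erase _ _ (Finset.mem_univ i), if_pos rfl,
          Finset.card_singleton, one_mul]
        have : ∀ x ∈ Finset.univ.erase i,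
            (if x = i then ({0} : Finset (Fin m → ℤ)) else rowB).card = (2*r+1)^m := by
          intro x hx
          rw [if_neg (Finset.ne_of_mem_erase hx), hrowB, Fintype.card_piFinset]
          simp [hIcc, Finset.prod_const]
        rw [Finset.prod_congr rfl this, Finset.prod_const,
          Finset.card_erase_of_mem (Finset.mem_univ i), Finset.card_univ, Fintype.card_fin]
      rw [hA, hB]
    simp only [hone]
    rw [Finset.sum_const, Finset.card_univ, Fintype.card_fin, smul_eq_mul]
  -- analytic part
  have hexp : k*n + m*(n-1) + m = n*(k+m) := by
    have h1 : n - 1 + 1 = n := by omega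
    calc k*n + m*(n-1) + m = k*n + m*((n-1)+1) := by ring
      _ = k*n + m*n := by rw [h1]
      _ = n*(k+m) := by ring
  have hupper : ∀ r : ℕ, ((S r).ncard : ℝ) / (2 * (r : ℝ) + 1) ^ (n * (k + m))
      ≤ (n : ℝ) / (2 * (r : ℝ) + 1) ^ m := by
    intro r
    have hx : (0:ℝ) < 2 * (r:ℝ) + 1 := by positivity
    rw [div_le_div_iff₀ (by positivity) (by positivity)]
    have hkey : ((S r).ncard : ℝ) ≤ (n : ℝ) * (2 * (r:ℝ) + 1) ^ (k*n + m*(n-1)) := by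
      have := key r
      have hcast : (((S r).ncard : ℕ) : ℝ) ≤ ((n * (((2*r+1)^k)^n * ((2*r+1)^m)^(n-1)) : ℕ) : ℝ) :=
        Nat.cast_le.mpr this
      calc ((S r).ncard : ℝ) ≤ ((n * (((2*r+1)^k)^n * ((2*r+1)^m)^(n-1)) : ℕ) : ℝ) := hcast
        _ = (n : ℝ) * (2 * (r:ℝ) + 1) ^ (k*n + m*(n-1)) := by
            push_cast
            rw [← pow_mul, ← pow_mul, ← pow_add]
    calc ((S r).ncard : ℝ) * (2 * (r:ℝ) + 1) ^ m
        ≤ ((n : ℝ) * (2 * (r:ℝ) + 1) ^ (k*n + m*(n-1))) * (2 * (r:ℝ) + 1) ^ m := by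
          exact mul_le_mul_of_nonneg_right hkey (by positivity)
      _ = (n : ℝ) * (2 * (r:ℝ) + 1) ^ (n*(k+m)) := by
          rw [mul_assoc, ← pow_add, hexp]
  have hlower : ∀ r : ℕ, 0 ≤ ((S r).ncard : ℝ) / (2 * (r : ℝ) + 1) ^ (n * (k + m)) := by
    intro r; positivity
  have hbound : Tendsto (fun r : ℕ => (n : ℝ) / (2 * (r : ℝ) + 1) ^ m) atTop (nhds 0) := by
    apply Tendsto.div_atTop (tendsto_const_nhds)
    have h1 : Tendsto (fun r : ℕ => 2 * (r : ℝ) + 1) atTop atTop := by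
      apply tendsto_atTop_add_const_right
      exact (tendsto_natCast_atTop_atTop).const_mul_atTop two_pos
    exact (tendsto_pow_atTop (by omega : m ≠ 0)).comp h1
  exact squeeze_zero hlower hupper hbound
end

section
/- For integers 1 ≤ n ≤ k, the set of integer n×k matrices of full rank n is generic: the asymptotic density, with respect to the ball stratification of Z^{nk} by sup-norm balls, of {A ∈ Z^{n×k} : rank(A) = n} equals 1; equivalently, for every s with 1 ≤ s ≤ n−1 the set {A ∈ Z^{n×k} : rank(A) = s} has asymptotic density 0. -/
open Filter MvPolynomial Finset Matrix


lemma sz_fin (F : Type*) [CommRing F] [IsDomain F] [DecidableEq F] :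
    ∀ (m : ℕ) (p : MvPolynomial (Fin m) F), p ≠ 0 → ∀ S : Finset F,
      ((Fintype.piFinset fun _ : Fin m => S).filter
          (fun x => eval x p = 0)).card * S.card ≤ p.totalDegree * S.card ^ m := by
  intro m
  induction m with
  | zero =>
      intro p hp S
      have he : ((Fintype.piFinset fun _ : Fin 0 => S).filter
          (fun x => eval x p = 0)) = ∅ := by
        rw [Finset.eq_empty_iff_forall_notMem]
        intro x hx
        rw [Finset.mem_filter] at hx
        have hc := eq_C_of_isEmpty p
        rw [hc, eval_C] at hx
        have : coeff 0 p ≠ 0 := fun h => hp (by rw [hc, h, map_zero])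
        exact this hx.2
      rw [he]
      simp
  | succ m ih =>
      intro p hp S
      classical
      set P := finSuccEquiv F m p with hPdef
      have hP : P ≠ 0 := fun h => hp ((map_eq_zero_iff _ (finSuccEquiv F m).injective).mp h)
      set d := P.natDegree with hd
      set q := P.coeff d with hqdef
      have hq : q ≠ 0 := Polynomial.leadingCoeff_ne_zero.mpr hP
      have hdeg : q.totalDegree + d ≤ p.totalDegree :=
        totalDegree_coeff_finSuccEquiv_add_le p d hq
      set box := Fintype.piFinset fun _ : Fin (m+1) => S with hbox
      set A1 := box.filter (fun x => eval x p = 0 ∧ eval (Fin.tail x) q = 0) with hA1def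
      set A2 := box.filter (fun x => eval x p = 0 ∧ ¬ eval (Fin.tail x) q = 0) with hA2def
      have hsplit : (box.filter (fun x => eval x p = 0)) = A1 ∪ A2 := by
        rw [hA1def, hA2def, ← Finset.filter_or]
        apply Finset.filter_congr
        intro x _
        tauto
      set Z := (Fintype.piFinset fun _ : Fin m => S).filter (fun s => eval s q = 0) with hZ
      have hA1 : A1.card ≤ S.card * Z.card := by
        have := Finset.card_le_card_of_injOn (s := A1) (fun x : Fin (m+1) → F => (x 0, Fin.tail x))
          (t := S ×ˢ Z) ?_ ?_
        · simpa using this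
        · intro x hx
          simp only [Finset.mem_coe, hA1def, Finset.mem_filter, hbox, Fintype.mem_piFinset] at hx
          rw [Finset.mem_coe, Finset.mem_product]
          refine ⟨hx.1 0, ?_⟩
          rw [hZ, Finset.mem_filter, Fintype.mem_piFinset]
          exact ⟨fun i => hx.1 _, hx.2.2⟩
        · intro x _ y _ hxy
          simp only [Prod.mk.injEq] at hxy
          have := Fin.cons_self_tail x
          rw [← Fin.cons_self_tail x, ← Fin.cons_self_tail y, hxy.1, hxy.2]
      have hA2 : A2.card ≤ S.card ^ m * d := by
        rw [Finset.card_eq_sum_card_fiberwise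
          (f := fun x => Fin.tail x) (t := Fintype.piFinset fun _ : Fin m => S) ?_]
        · calc ∑ s ∈ Fintype.piFinset fun _ : Fin m => S,
              (A2.filter fun x => Fin.tail x = s).card
              ≤ ∑ s ∈ Fintype.piFinset fun _ : Fin m => S, d := by
                apply Finset.sum_le_sum
                intro s _
                by_cases hs : eval s q = 0
                · have : (A2.filter fun x => Fin.tail x = s) = ∅ := by
                    rw [Finset.eq_empty_iff_forall_notMem]
                    intro x hx
                    rw [Finset.mem_filter, hA2def, Finset.mem_filter] at hx
                    rw [hx.2] at hx
                    exact hx.1.2.2 hs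
                  simp [this]
                · have hmapne : P.map (eval s) ≠ 0 := by
                    intro h
                    apply hs
                    have := congrArg (fun Q => Polynomial.coeff Q d) h
                    simpa [Polynomial.coeff_map] using this
                  have := Finset.card_le_card_of_injOn
                    (s := A2.filter fun x => Fin.tail x = s) (fun x : Fin (m+1) → F => x 0)
                    (t := (P.map (eval s)).roots.toFinset) ?_ ?_
                  · refine this.trans ?_
                    calc (P.map (eval s)).roots.toFinset.card
                        ≤ Multiset.card (P.map (eval s)).roots := Multiset.toFinset_card_le _
                      _ ≤ (P.map (eval s)).natDegree := Polynomial.card_roots' _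
                      _ ≤ d := Polynomial.natDegree_map_le
                  · intro x hx
                    simp only [Finset.mem_coe, Finset.mem_filter, hA2def] at hx
                    rw [Finset.mem_coe, Multiset.mem_toFinset, Polynomial.mem_roots']
                    refine ⟨hmapne, ?_⟩
                    have hx0 : eval x p = 0 := hx.1.2.1
                    rw [← Fin.cons_self_tail x, eval_eq_eval_mv_eval'] at hx0
                    rw [Polynomial.IsRoot, ← hx.2]
                    exact hx0
                  · intro x hx y hy hxy
                    simp only [Finset.mem_coe, Finset.mem_filter] at hx hy
                    simp only at hxy
                    rw [← Fin.cons_self_tail x, ← Fin.cons_self_tail y, hxy, hx.2, hy.2]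
            _ = S.card ^ m * d := by
                rw [Finset.sum_const, smul_eq_mul]
                congr 1
                simp [Fintype.card_piFinset]
        · intro x hx
          simp only [Finset.mem_coe, hA2def, Finset.mem_filter, hbox, Fintype.mem_piFinset] at hx
          rw [Finset.mem_coe, Fintype.mem_piFinset]
          exact fun i => hx.1 _
      have ihZ : Z.card * S.card ≤ q.totalDegree * S.card ^ m := ih q hq S
      calc ((box.filter (fun x => eval x p = 0)).card) * S.card
          ≤ (A1.card + A2.card) * S.card := by
            apply Nat.mul_le_mul_right
            rw [hsplit]
            exact Finset.card_union_le _ _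
        _ ≤ (S.card * Z.card + S.card ^ m * d) * S.card := by
            apply Nat.mul_le_mul_right
            exact Nat.add_le_add hA1 hA2
        _ = S.card * (Z.card * S.card) + d * S.card ^ (m + 1) := by ring
        _ ≤ S.card * (q.totalDegree * S.card ^ m) + d * S.card ^ (m + 1) := by
            exact Nat.add_le_add_right (Nat.mul_le_mul_left _ ihZ) _
        _ = (q.totalDegree + d) * S.card ^ (m + 1) := by ring
        _ ≤ p.totalDegree * S.card ^ (m + 1) := Nat.mul_le_mul_right _ hdeg

lemma sz_gen {F : Type*} [CommRing F] [IsDomain F] [DecidableEq F]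
    (σ : Type*) [Fintype σ] [DecidableEq σ]
    (p : MvPolynomial σ F) (hp : p ≠ 0) (S : Finset F) :
    ((Fintype.piFinset fun _ : σ => S).filter
        (fun x => eval x p = 0)).card * S.card ≤ p.totalDegree * S.card ^ (Fintype.card σ) := by
  classical
  set e := Fintype.equivFin σ with he
  set p' : MvPolynomial (Fin (Fintype.card σ)) F := rename e p with hp'
  have hinj : Function.Injective (rename (R := F) e) := rename_injective _ e.injective
  have hp'0 : p' ≠ 0 := fun h => hp (hinj (by simpa [hp'] using h))
  have hcard : ((Fintype.piFinset fun _ : σ => S).filter (fun x => eval x p = 0)).card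
      = ((Fintype.piFinset fun _ : Fin (Fintype.card σ) => S).filter
          (fun x => eval x p' = 0)).card := by
    apply Finset.card_nbij' (fun x => x ∘ e.symm) (fun y => y ∘ e)
    · intro x hx
      simp only [Finset.mem_coe, Finset.mem_filter, Fintype.mem_piFinset] at hx ⊢
      refine ⟨fun i => hx.1 _, ?_⟩
      rw [hp', eval_rename]
      have : (x ∘ e.symm) ∘ e = x := by ext i; simp
      rw [this]
      exact hx.2
    · intro y hy
      simp only [Finset.mem_coe, Finset.mem_filter, Fintype.mem_piFinset] at hy ⊢
      refine ⟨fun i => hy.1 _, ?_⟩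
      have := hy.2
      rw [hp', eval_rename] at this
      exact this
    · intro x _; ext i; simp
    · intro y _; ext i; simp
  rw [hcard]
  calc _ ≤ p'.totalDegree * S.card ^ (Fintype.card σ) := sz_fin F _ p' hp'0 S
    _ ≤ p.totalDegree * S.card ^ (Fintype.card σ) :=
        Nat.mul_le_mul_right _ (totalDegree_rename_le _ _)

-- rank lemmas
lemma rank_submatrix_row_le {l m n : Type*} [Fintype n] [Fintype m] [Fintype l]
    (M : Matrix m n ℚ) (f : l → m) : (M.submatrix f id).rank ≤ M.rank := by
  rw [Matrix.rank, Matrix.rank]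
  have h : (M.submatrix f id).mulVecLin = (LinearMap.funLeft ℚ ℚ f).comp M.mulVecLin := by
    ext v i
    simp [Matrix.mulVecLin, Matrix.mulVec, dotProduct, LinearMap.funLeft]
  rw [h, LinearMap.range_comp]
  exact Submodule.finrank_map_le _ _

lemma rank_full_of_det {n k : ℕ} (hnk : n ≤ k) (A : Matrix (Fin n) (Fin k) ℚ)
    (h : (A.submatrix id (Fin.castLE hnk)).det ≠ 0) : A.rank = n := by
  set B := A.submatrix id (Fin.castLE hnk) with hB
  have hU : IsUnit B := B.isUnit_iff_isUnit_det.mpr h.isUnit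
  have h1 : B.rank = n := by rw [Matrix.rank_of_isUnit B hU, Fintype.card_fin]
  have h2 : Bᵀ.rank ≤ Aᵀ.rank := by
    have hBt : Bᵀ = Aᵀ.submatrix (Fin.castLE hnk) id := rfl
    rw [hBt]
    exact rank_submatrix_row_le _ _
  have h3 : A.rank ≤ n := by
    have := Matrix.rank_le_card_height A
    simpa using this
  have h4 := Matrix.rank_transpose A
  have h5 := Matrix.rank_transpose B
  omega

/-- For `1 ≤ n ≤ k`, the set of integer `n × k` matrices of full rank `n`
is generic with respect to the ball stratification of `Z^{nk}` by sup-norm balls;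
equivalently, for each `1 ≤ s ≤ n - 1` the set of matrices of rank `s` has density 0. -/
theorem full_rank_generic (n k : ℕ) (hn : 1 ≤ n) (hnk : n ≤ k) :
    Tendsto (fun r : ℕ =>
      ((Set.ncard {A : Matrix (Fin n) (Fin k) ℤ |
          (A.map ((↑) : ℤ → ℚ)).rank = n ∧ ∀ i j, |A i j| ≤ (r : ℤ)} : ℝ) /
        (2 * (r : ℝ) + 1) ^ (n * k))) atTop (nhds 1)
    ∧ ∀ s : ℕ, 1 ≤ s → s ≤ n - 1 →
      Tendsto (fun r : ℕ =>
        ((Set.ncard {A : Matrix (Fin n) (Fin k) ℤ |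
            (A.map ((↑) : ℤ → ℚ)).rank = s ∧ ∀ i j, |A i j| ≤ (r : ℤ)} : ℝ) /
          (2 * (r : ℝ) + 1) ^ (n * k))) atTop (nhds 0) := by
  classical
  -- the box of matrices with entries bounded by r
  set boxF : ℕ → Finset (Matrix (Fin n) (Fin k) ℤ) := fun r =>
    Fintype.piFinset fun _ : Fin n => Fintype.piFinset fun _ : Fin k =>
      Finset.Icc (-(r : ℤ)) (r : ℤ) with hboxF
  have hmem : ∀ (r : ℕ) (A : Matrix (Fin n) (Fin k) ℤ),
      A ∈ boxF r ↔ ∀ i j, |A i j| ≤ (r : ℤ) := by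
    intro r A
    have h1 : A ∈ boxF r ↔ ∀ i, A i ∈ Fintype.piFinset fun _ : Fin k =>
        Finset.Icc (-(r : ℤ)) (r : ℤ) := Fintype.mem_piFinset
    rw [h1]
    apply forall_congr'
    intro i
    rw [Fintype.mem_piFinset]
    apply forall_congr'
    intro j
    rw [Finset.mem_Icc, ← abs_le]
  have hIcc : ∀ r : ℕ, (Finset.Icc (-(r : ℤ)) (r : ℤ)).card = 2 * r + 1 := by
    intro r
    rw [Int.card_Icc]
    omega
  have hboxcard : ∀ r : ℕ, (boxF r).card = (2 * r + 1) ^ (n * k) := by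
    intro r
    have h1 : (boxF r).card = ∏ _i : Fin n,
        (Fintype.piFinset fun _ : Fin k => Finset.Icc (-(r : ℤ)) (r : ℤ)).card :=
      Fintype.card_piFinset _
    have h2 : (Fintype.piFinset fun _ : Fin k => Finset.Icc (-(r : ℤ)) (r : ℤ)).card
        = ∏ _j : Fin k, (Finset.Icc (-(r : ℤ)) (r : ℤ)).card := Fintype.card_piFinset _
    rw [h1, h2, hIcc]
    simp only [Finset.prod_const, Finset.card_univ, Fintype.card_fin]
    rw [← pow_mul, mul_comm k n]
  -- the determinant polynomial
  set pd : MvPolynomial (Fin n × Fin k) ℚ :=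
    rename (fun v : Fin n × Fin n => (v.1, Fin.castLE hnk v.2))
      (Matrix.mvPolynomialX (Fin n) (Fin n) ℚ).det with hpd
  have hinjmap : Function.Injective (fun v : Fin n × Fin n => (v.1, Fin.castLE hnk v.2)) := by
    intro a b hab
    simp only [Prod.mk.injEq] at hab
    exact Prod.ext hab.1 (Fin.castLE_injective hnk hab.2)
  have hpd0 : pd ≠ 0 := by
    intro h
    apply det_mvPolynomialX_ne_zero (Fin n) ℚ
    exact (rename_injective _ hinjmap) (by simpa [hpd] using h)
  have heval : ∀ A : Matrix (Fin n) (Fin k) ℤ,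
      eval (fun v : Fin n × Fin k => ((A v.1 v.2 : ℤ) : ℚ)) pd
        = ((A.map ((↑) : ℤ → ℚ)).submatrix id (Fin.castLE hnk)).det := by
    intro A
    rw [hpd, eval_rename, RingHom.map_det]
    congr 1
    ext i j
    simp [Matrix.mvPolynomialX, Function.comp]
  -- the bad set
  set bad : ℕ → Finset (Matrix (Fin n) (Fin k) ℤ) := fun r =>
    (boxF r).filter (fun A => ¬ (A.map ((↑) : ℤ → ℚ)).rank = n) with hbad
  set S : ℕ → Finset ℚ := fun r => (Finset.Icc (-(r : ℤ)) (r : ℤ)).image ((↑) : ℤ → ℚ)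
    with hS
  have hScard : ∀ r, (S r).card = 2 * r + 1 := by
    intro r
    rw [hS]
    rw [Finset.card_image_of_injective _ (Int.cast_injective), hIcc]
  have hbadle : ∀ r : ℕ, (bad r).card ≤
      ((Fintype.piFinset fun _ : Fin n × Fin k => S r).filter
        (fun x => eval x pd = 0)).card := by
    intro r
    apply Finset.card_le_card_of_injOn
      (fun A => fun v : Fin n × Fin k => ((A v.1 v.2 : ℤ) : ℚ))
    · intro A hA
      simp only [Finset.mem_coe, hbad, Finset.mem_filter, hmem] at hA
      simp only [Finset.mem_coe, Finset.mem_filter, Fintype.mem_piFinset]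
      constructor
      · intro v
        rw [hS, Finset.mem_image]
        exact ⟨A v.1 v.2, by rw [Finset.mem_Icc]; exact abs_le.mp (hA.1 v.1 v.2), rfl⟩
      · rw [heval A]
        by_contra hdet
        exact hA.2 (rank_full_of_det hnk _ hdet)
    · intro A _ B _ hAB
      ext i j
      have h2 : ((A i j : ℤ) : ℚ) = ((B i j : ℤ) : ℚ) := congrFun hAB (i, j)
      exact_mod_cast h2
  set D : ℕ := pd.totalDegree with hD
  have hkey : ∀ r : ℕ, (bad r).card * (2 * r + 1) ≤ D * (2 * r + 1) ^ (n * k) := by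
    intro r
    calc (bad r).card * (2 * r + 1)
        ≤ ((Fintype.piFinset fun _ : Fin n × Fin k => S r).filter
            (fun x => eval x pd = 0)).card * (S r).card := by
          rw [hScard]
          exact Nat.mul_le_mul_right _ (hbadle r)
      _ ≤ D * (S r).card ^ (Fintype.card (Fin n × Fin k)) := sz_gen _ pd hpd0 (S r)
      _ = D * (2 * r + 1) ^ (n * k) := by
          rw [hScard, Fintype.card_prod, Fintype.card_fin, Fintype.card_fin]
  -- real versions
  have hcpos : ∀ r : ℕ, (0 : ℝ) < 2 * (r : ℝ) + 1 := by intro r; positivity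
  have hcpow : ∀ r : ℕ, (0 : ℝ) < (2 * (r : ℝ) + 1) ^ (n * k) := by
    intro r; positivity
  have hbadR : ∀ r : ℕ, ((bad r).card : ℝ) / (2 * (r : ℝ) + 1) ^ (n * k)
      ≤ D / (2 * (r : ℝ) + 1) := by
    intro r
    rw [div_le_div_iff₀ (hcpow r) (hcpos r)]
    have h := hkey r
    calc ((bad r).card : ℝ) * (2 * (r : ℝ) + 1)
        = (((bad r).card * (2 * r + 1) : ℕ) : ℝ) := by push_cast; ring
      _ ≤ ((D * (2 * r + 1) ^ (n * k) : ℕ) : ℝ) := by exact_mod_cast h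
      _ = D * (2 * (r : ℝ) + 1) ^ (n * k) := by push_cast; ring
  have hc : Tendsto (fun r : ℕ => 2 * (r : ℝ) + 1) atTop atTop := by
    apply Filter.tendsto_atTop_add_const_right
    exact Tendsto.const_mul_atTop two_pos tendsto_natCast_atTop_atTop
  have hDc : Tendsto (fun r : ℕ => (D : ℝ) / (2 * (r : ℝ) + 1)) atTop (nhds 0) :=
    Tendsto.div_atTop tendsto_const_nhds hc
  have hbad0 : Tendsto (fun r : ℕ => ((bad r).card : ℝ) / (2 * (r : ℝ) + 1) ^ (n * k))
      atTop (nhds 0) :=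
    squeeze_zero (fun r => by positivity) hbadR hDc
  constructor
  · -- full rank part
    have hgoodset : ∀ r : ℕ, {A : Matrix (Fin n) (Fin k) ℤ |
        (A.map ((↑) : ℤ → ℚ)).rank = n ∧ ∀ i j, |A i j| ≤ (r : ℤ)}
        = ↑((boxF r).filter (fun A => (A.map ((↑) : ℤ → ℚ)).rank = n)) := by
      intro r
      ext A
      simp only [Set.mem_setOf_eq, Finset.coe_filter, hmem]
      tauto
    have hcardsum : ∀ r : ℕ,
        ((boxF r).filter (fun A => (A.map ((↑) : ℤ → ℚ)).rank = n)).card + (bad r).card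
          = (2 * r + 1) ^ (n * k) := by
      intro r
      rw [hbad, Finset.card_filter_add_card_filter_not, hboxcard]
    have heq : ∀ r : ℕ,
        ((Set.ncard {A : Matrix (Fin n) (Fin k) ℤ |
          (A.map ((↑) : ℤ → ℚ)).rank = n ∧ ∀ i j, |A i j| ≤ (r : ℤ)} : ℝ) /
          (2 * (r : ℝ) + 1) ^ (n * k))
        = 1 - ((bad r).card : ℝ) / (2 * (r : ℝ) + 1) ^ (n * k) := by
      intro r
      rw [hgoodset r, Set.ncard_coe_finset]
      have h2 : ((((boxF r).filter (fun A => (A.map ((↑) : ℤ → ℚ)).rank = n)).card : ℝ))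
          + ((bad r).card : ℝ) = (2 * (r : ℝ) + 1) ^ (n * k) := by
        exact_mod_cast hcardsum r
      have h1 : ((((boxF r).filter (fun A => (A.map ((↑) : ℤ → ℚ)).rank = n)).card : ℝ))
          = (2 * (r : ℝ) + 1) ^ (n * k) - ((bad r).card : ℝ) := by linarith
      rw [h1, sub_div, div_self (hcpow r).ne']
    have hfun : (fun r : ℕ =>
        ((Set.ncard {A : Matrix (Fin n) (Fin k) ℤ |
          (A.map ((↑) : ℤ → ℚ)).rank = n ∧ ∀ i j, |A i j| ≤ (r : ℤ)} : ℝ) /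
          (2 * (r : ℝ) + 1) ^ (n * k)))
        = (fun r : ℕ => 1 - ((bad r).card : ℝ) / (2 * (r : ℝ) + 1) ^ (n * k)) :=
      funext heq
    rw [hfun]
    simpa using tendsto_const_nhds.sub hbad0
  · intro s hs1 hs2
    have hsn : s ≠ n := by omega
    have hset : ∀ r : ℕ, {A : Matrix (Fin n) (Fin k) ℤ |
        (A.map ((↑) : ℤ → ℚ)).rank = s ∧ ∀ i j, |A i j| ≤ (r : ℤ)}
        = ↑((boxF r).filter (fun A => (A.map ((↑) : ℤ → ℚ)).rank = s)) := by
      intro r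
      ext A
      simp only [Set.mem_setOf_eq, Finset.coe_filter, hmem]
      tauto
    have hsub : ∀ r : ℕ,
        (boxF r).filter (fun A => (A.map ((↑) : ℤ → ℚ)).rank = s) ⊆ bad r := by
      intro r A hA
      rw [Finset.mem_filter] at hA
      rw [hbad, Finset.mem_filter]
      exact ⟨hA.1, fun h => hsn (hA.2.symm.trans h)⟩
    apply squeeze_zero (fun r => by positivity) ?_ hbad0
    intro r
    rw [hset r, Set.ncard_coe_finset]
    gcongr
    exact hsub r
end

section
/- Let d ≥ 1 and 0 ≤ i ≤ d. For every r with 0 ≤ r ≤ d, the absolute value of the coefficient of t^r in the degree-d polynomial C(t+d−i, d) = (t+d−i)(t+d−i−1)⋯(t−i+1)/d! is at most the coefficient of t^r in the polynomial C(t+d, d) = (t+d)(t+d−1)⋯(t+1)/d! (all coefficients of the latter polynomial are nonnegative). -/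
open Polynomial

lemma aux_step (p q : Polynomial ℚ) (a b : ℚ) (hab : |a| ≤ b)
    (h : ∀ r, |p.coeff r| ≤ q.coeff r) :
    ∀ r, |((X + C a) * p).coeff r| ≤ ((X + C b) * q).coeff r := by
  intro r
  have hb0 : 0 ≤ b := le_trans (abs_nonneg _) hab
  rw [add_mul, add_mul, coeff_add, coeff_add, coeff_C_mul, coeff_C_mul]
  rcases r with _ | r
  · rw [mul_coeff_zero, mul_coeff_zero, coeff_X_zero, zero_mul, zero_mul, zero_add, zero_add,
      abs_mul]
    exact mul_le_mul hab (h 0) (abs_nonneg _) hb0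
  · rw [coeff_X_mul, coeff_X_mul]
    calc |p.coeff r + a * p.coeff (r+1)| ≤ |p.coeff r| + |a| * |p.coeff (r+1)| := by
          rw [← abs_mul]; exact abs_add_le _ _
      _ ≤ q.coeff r + b * q.coeff (r+1) := by
          exact add_le_add (h r)
            (mul_le_mul hab (h (r+1)) (abs_nonneg _) hb0)

lemma aux_abs_coeff_prod (s : Finset ℕ) (a b : ℕ → ℚ) (h : ∀ l ∈ s, |a l| ≤ b l) :
    ∀ r, |(∏ l ∈ s, (X + C (a l))).coeff r| ≤ (∏ l ∈ s, (X + C (b l))).coeff r := by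
  induction s using Finset.induction with
  | empty =>
    intro r
    rcases r with _ | r <;> simp [coeff_one]
  | insert x s hx ih =>
    rw [Finset.prod_insert hx, Finset.prod_insert hx]
    exact aux_step _ _ _ _ (h x (Finset.mem_insert_self x s))
      (ih fun l hl => h l (Finset.mem_insert_of_mem hl))

open Polynomial

/-- For `d ≥ 1` and `0 ≤ i ≤ d`, and every `0 ≤ r ≤ d`, the absolute value
of the coefficient of `t^r` in the polynomial `C(t+d−i, d) = ∏_{l<d} (t+d−i−l) / d!`
is at most the coefficient of `t^r` in `C(t+d, d) = ∏_{l<d} (t+d−l) / d!`. -/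
theorem abs_coeff_binomial_shift_le (d i : ℕ) (hd : 1 ≤ d) (hi : i ≤ d)
    (r : ℕ) (hr : r ≤ d) :
    |(Polynomial.C ((d.factorial : ℚ))⁻¹ *
        ∏ l ∈ Finset.range d, (Polynomial.X + Polynomial.C ((d : ℚ) - i - l))).coeff r|
      ≤ (Polynomial.C ((d.factorial : ℚ))⁻¹ *
        ∏ l ∈ Finset.range d, (Polynomial.X + Polynomial.C ((d : ℚ) - l))).coeff r := by
  have hc : (0:ℚ) ≤ ((d.factorial : ℚ))⁻¹ := by positivity
  rw [coeff_C_mul, coeff_C_mul, abs_mul, abs_of_nonneg hc]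
  refine mul_le_mul_of_nonneg_left ?_ hc
  have hre : (∏ l ∈ Finset.range d, (X + Polynomial.C ((d : ℚ) - l)))
      = ∏ l ∈ Finset.range d,
        (X + Polynomial.C ((d : ℚ) - ((if l < d - i then l + i else d - 1 - l : ℕ) : ℚ))) := by
    refine (Finset.prod_nbij' (fun l => if l < d - i then l + i else d - 1 - l)
      (fun m => if m < i then d - 1 - m else m - i) ?_ ?_ ?_ ?_ ?_).symm
    · intro l hl; simp only [Finset.mem_range] at *; split <;> omega
    · intro m hm; simp only [Finset.mem_range] at *; split <;> omega
    · intro l hl; simp only [Finset.mem_range] at hl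
      split <;> rename_i h1
      · split <;> omega
      · split <;> omega
    · intro m hm; simp only [Finset.mem_range] at hm
      split <;> rename_i h1
      · split <;> omega
      · split <;> omega
    · intro l hl; rfl
  rw [hre]
  refine aux_abs_coeff_prod _ _ _ ?_ r
  intro l hl
  simp only [Finset.mem_range] at hl
  by_cases h : l < d - i
  · rw [if_pos h]
    have : ((d : ℚ) - i - l) = (d:ℚ) - ((l + i : ℕ) : ℚ) := by push_cast; ring
    rw [this, abs_of_nonneg]
    have : (l + i : ℕ) ≤ d := by omega
    have := (Nat.cast_le (α := ℚ)).2 this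
    linarith
  · rw [if_neg h]
    have h1 : ((d - 1 - l : ℕ) : ℚ) = (d:ℚ) - 1 - l := by
      have : l ≤ d - 1 := by omega
      push_cast [Nat.sub_sub, Nat.cast_sub (by omega : 1 + l ≤ d)]
      ring
    rw [h1]
    rw [abs_le]
    constructor
    · have : (i:ℚ) ≤ d := by exact_mod_cast hi
      linarith
    · have : (d:ℚ) - i ≤ l := by
        have : d - i ≤ l := by omega
        have h2 : ((d - i : ℕ) : ℚ) = (d:ℚ) - i := by push_cast [Nat.cast_sub hi]; ring
        calc (d:ℚ) - i = ((d - i : ℕ) : ℚ) := h2.symm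
          _ ≤ l := by exact_mod_cast this
      linarith
end

section
/- Let d ≥ 1, p ≥ 1 be integers and h_0, …, h_{(d+1)p−1} nonnegative integers. For each j ∈ {0, …, p−1} let f_j(t) = Σ_{i=0}^{d} h_{ip+j} C(t+d−i, d), and write f_j(t) = Σ_{r=0}^{d} c_r(j) t^r. Suppose the leading coefficient is the same for all residues: c_d(j) = c_d for all j (as holds for the constituents of an Ehrhart quasipolynomial, where c_d = vol(P)). Then for every j ∈ {0, …, p−1} and every r with 1 ≤ r ≤ d−1: |c_r(j)| ≤ |s(d+1, r+1)| · c_d. In particular, if P is a rational convex d-polytope with denominator p whose Ehrhart series equals (Σ_{i} h_i z^i)/(1−z^p)^{d+1} with h_i ∈ N, then the coefficients of its Ehrhart quasipolynomial L_P(t) = c_d t^d + c_{d−1}(t) t^{d−1} + ⋯ + c_1(t) t + 1 satisfy |c_r(t)| ≤ |s(d+1, r+1)| c_d for r = 1, …, d−1 and all t ∈ Z^+. -/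
open Polynomial

open Finset
def gfun (d i l : ℕ) : ℕ :=
  if l < d then (if l + i < d then d - l else l + i + 1 - d) else l + d + 1

lemma gfun_inj (d i : ℕ) (hi : i ≤ d) : Function.Injective (gfun d i) := by
  intro a b hab
  unfold gfun at hab
  split_ifs at hab <;> omega

lemma gfun_mem (d i l : ℕ) (hi : i ≤ d) (hl : l < d) : gfun d i l < d + 1 := by
  unfold gfun; split_ifs <;> omega

lemma gfun_bound (d i l : ℕ) (hi : i ≤ d) (hl : l < d) :
    |(d : ℚ) - i - l| ≤ (gfun d i l : ℚ) := by
  have key : |(d : ℤ) - i - l| ≤ (gfun d i l : ℤ) := by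
    rw [abs_le]
    unfold gfun
    constructor <;> split_ifs <;> push_cast <;> omega
  calc |(d : ℚ) - i - l| = |(((d : ℤ) - i - l : ℤ) : ℚ)| := by norm_cast
    _ ≤ ((gfun d i l : ℤ) : ℚ) := by exact_mod_cast key
    _ = (gfun d i l : ℚ) := by push_cast; ring

lemma target_coeff (d r : ℕ) (hr : r ≤ d) :
    |(∏ l ∈ Finset.range (d + 1), (X - C ((l : ℚ)))).coeff (r + 1)| =
      ∑ T ∈ (Finset.range (d + 1)).powersetCard (d - r), ∏ m ∈ T, (m : ℚ) := by
  have h1 : ∀ l ∈ Finset.range (d+1), (X - C ((l:ℚ))) = X + C (-(l:ℚ)) := by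
    intro l _; rw [sub_eq_add_neg, map_neg]
  rw [Finset.prod_congr rfl h1,
    Finset.prod_X_add_C_coeff _ _ (show r+1 ≤ #(Finset.range (d+1)) by rw [Finset.card_range]; omega)]
  have hcard : #(Finset.range (d+1)) - (r+1) = d - r := by rw [Finset.card_range]; omega
  rw [hcard]
  have h2 : ∀ T ∈ (Finset.range (d + 1)).powersetCard (d - r),
      (∏ i ∈ T, -(i:ℚ)) = (-1)^(d-r) * ∏ i ∈ T, (i:ℚ) := by
    intro T hT
    have : (∏ i ∈ T, -(i:ℚ)) = ∏ i ∈ T, ((-1) * (i:ℚ)) := by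
      exact Finset.prod_congr rfl fun i _ => by ring
    rw [this, Finset.prod_mul_distrib, Finset.prod_const, (Finset.mem_powersetCard.mp hT).2]
  rw [Finset.sum_congr rfl h2, ← Finset.mul_sum, abs_mul, abs_pow, abs_neg, abs_one,
    one_pow, one_mul, abs_of_nonneg]
  exact Finset.sum_nonneg fun T _ => Finset.prod_nonneg fun m _ => by positivity

lemma key_coeff (d i r : ℕ) (hi : i ≤ d) (hr : r ≤ d) :
    |(∏ l ∈ Finset.range d, (X + C ((d : ℚ) - i - l))).coeff r| ≤
      |(∏ l ∈ Finset.range (d + 1), (X - C ((l : ℚ)))).coeff (r + 1)| := by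
  rw [target_coeff d r hr,
    Finset.prod_X_add_C_coeff _ _ (show r ≤ #(Finset.range d) by rw [Finset.card_range]; omega)]
  have hcard : #(Finset.range d) - r = d - r := by rw [Finset.card_range]
  rw [hcard]
  set A := (Finset.range d).powersetCard (d - r) with hA
  calc |∑ S ∈ A, ∏ l ∈ S, ((d : ℚ) - i - l)|
      ≤ ∑ S ∈ A, |∏ l ∈ S, ((d : ℚ) - i - l)| := Finset.abs_sum_le_sum_abs _ _
    _ ≤ ∑ S ∈ A, ∏ m ∈ S.image (gfun d i), (m : ℚ) := by
        refine Finset.sum_le_sum fun S hS => ?_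
        have hSsub : S ⊆ Finset.range d := (Finset.mem_powersetCard.mp hS).1
        rw [Finset.prod_image (fun a _ b _ hab => gfun_inj d i hi hab),
          Finset.abs_prod]
        exact Finset.prod_le_prod (fun l _ => abs_nonneg _)
          (fun l hl => gfun_bound d i l hi (Finset.mem_range.mp (hSsub hl)))
    _ = ∑ T ∈ A.image (fun S : Finset ℕ => S.image (gfun d i)), ∏ m ∈ T, (m : ℚ) := by
        rw [Finset.sum_image (fun S₁ _ S₂ _ he =>
          Finset.image_injective (gfun_inj d i hi) he)]
    _ ≤ ∑ T ∈ (Finset.range (d + 1)).powersetCard (d - r), ∏ m ∈ T, (m : ℚ) := by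
        refine Finset.sum_le_sum_of_subset_of_nonneg ?_
          (fun T _ _ => Finset.prod_nonneg fun m _ => by positivity)
        intro T hT
        obtain ⟨S, hS, rfl⟩ := Finset.mem_image.mp hT
        obtain ⟨hSsub, hScard⟩ := Finset.mem_powersetCard.mp hS
        rw [Finset.mem_powersetCard]
        constructor
        · intro m hm
          obtain ⟨l, hl, rfl⟩ := Finset.mem_image.mp hm
          exact Finset.mem_range.mpr (gfun_mem d i l hi (Finset.mem_range.mp (hSsub hl)))
        · rw [Finset.card_image_of_injective _ (gfun_inj d i hi), hScard]

/-- Let `d, p ≥ 1` and `h_0, …, h_{(d+1)p−1}` nonnegative integers.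
For `j ∈ {0,…,p−1}`, let `f_j(t) = Σ_{i=0}^{d} h_{ip+j} C(t+d−i, d)` with coefficients
`c_r(j)`. If the leading coefficient `c_d(j) = c_d` is the same for all residues `j`
(as for the constituents of an Ehrhart quasipolynomial, where `c_d = vol(P)`), then
`|c_r(j)| ≤ |s(d+1, r+1)| · c_d` for all `j < p` and `1 ≤ r ≤ d−1`, where
`s(d+1, r+1)` is the Stirling number of the first kind, i.e. the coefficient of
`x^{r+1}` in `x(x−1)⋯(x−d)`. -/
theorem ehrhart_coeff_bound (d p : ℕ) (hd : 1 ≤ d) (hp : 1 ≤ p) (h : ℕ → ℕ)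
    (f : ℕ → Polynomial ℚ)
    (hf : ∀ j, f j = ∑ i ∈ Finset.range (d + 1),
      Polynomial.C ((h (i * p + j) : ℚ)) *
        (Polynomial.C ((d.factorial : ℚ))⁻¹ *
          ∏ l ∈ Finset.range d, (Polynomial.X + Polynomial.C ((d : ℚ) - i - l))))
    (cd : ℚ) (hlead : ∀ j < p, (f j).coeff d = cd) :
    ∀ j < p, ∀ r, 1 ≤ r → r ≤ d - 1 →
      |(f j).coeff r| ≤
        |(∏ l ∈ Finset.range (d + 1), (Polynomial.X - Polynomial.C ((l : ℚ)))).coeff (r + 1)|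
          * cd := by
  intro j hj r hr1 hr2
  have hrd : r ≤ d := by omega
  set P : ℕ → Polynomial ℚ := fun i => ∏ l ∈ Finset.range d, (X + C ((d : ℚ) - i - l)) with hP
  have hcoeff : ∀ k, (f j).coeff k = ∑ i ∈ Finset.range (d + 1),
      (h (i * p + j) : ℚ) * ((d.factorial : ℚ)⁻¹ * (P i).coeff k) := by
    intro k
    rw [hf j, Polynomial.finset_sum_coeff]
    exact Finset.sum_congr rfl fun i _ => by rw [coeff_C_mul, coeff_C_mul]
  have hPd : ∀ i, (P i).coeff d = 1 := by
    intro i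
    rw [hP]
    rw [Finset.prod_X_add_C_coeff _ _ (show d ≤ #(Finset.range d) by rw [Finset.card_range])]
    simp
  have hcd : cd = ∑ i ∈ Finset.range (d + 1), (h (i * p + j) : ℚ) * (d.factorial : ℚ)⁻¹ := by
    rw [← hlead j hj, hcoeff d]
    exact Finset.sum_congr rfl fun i _ => by rw [hPd i]; ring
  set T := |(∏ l ∈ Finset.range (d + 1), (X - C ((l : ℚ)))).coeff (r + 1)| with hT
  calc |(f j).coeff r|
      ≤ ∑ i ∈ Finset.range (d + 1),
          (h (i * p + j) : ℚ) * ((d.factorial : ℚ)⁻¹ * |(P i).coeff r|) := by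
        rw [hcoeff r]
        refine (Finset.abs_sum_le_sum_abs _ _).trans (Finset.sum_le_sum fun i _ => ?_)
        rw [abs_mul, abs_mul, abs_of_nonneg (by positivity : (0:ℚ) ≤ (h (i * p + j) : ℚ)),
          abs_of_nonneg (by positivity : (0:ℚ) ≤ ((d.factorial : ℚ))⁻¹)]
    _ ≤ ∑ i ∈ Finset.range (d + 1),
          (h (i * p + j) : ℚ) * ((d.factorial : ℚ)⁻¹ * T) := by
        refine Finset.sum_le_sum fun i hi => ?_
        have hi' : i ≤ d := by have := Finset.mem_range.mp hi; omega
        have := key_coeff d i r hi' hrd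
        have h1 : (0:ℚ) ≤ (h (i * p + j) : ℚ) := by positivity
        have h2 : (0:ℚ) ≤ ((d.factorial : ℚ))⁻¹ := by positivity
        exact mul_le_mul_of_nonneg_left (mul_le_mul_of_nonneg_left this h2) h1
    _ = T * cd := by
        rw [hcd, Finset.mul_sum]
        exact Finset.sum_congr rfl fun i _ => by ring
end
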